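/- A countable product of pro-finite-dimensional K-vector spaces, with the product topology, is again a pro-finite-dimensional K-vector space. -/

import Mathlib

/-- The inverse limit of an inverse sequence of `K`-modules along the connecting
maps `q i : V (i+1) → V i`, realized as the submodule of consistent sequences in
the product `∀ i, V i`. -/
def invLim (K : Type) [Field K] (V : ℕ → Type) [∀ i, AddCommGroup (V i)]
    [∀ i, Module K (V i)] (q : ∀ i, V (i + 1) →ₗ[K] V i) : Submodule K (∀ i, V i) where
  carrier := {v | ∀ i, q i (v (i + 1)) = v i}
  add_mem' := by intro a b ha hb i; simp [ha i, hb i]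
  zero_mem' := by intro i; simp
  smul_mem' := by intro c a ha i; simp [ha i]

/-- The canonical projection `Q i` from the inverse limit to the `i`-th stage. -/
def invLimProj (K : Type) [Field K] (V : ℕ → Type) [∀ i, AddCommGroup (V i)]
    [∀ i, Module K (V i)] (q : ∀ i, V (i + 1) →ₗ[K] V i) (i : ℕ) :
    ↥(invLim K V q) →ₗ[K] V i :=
  (LinearMap.proj i).comp (invLim K V q).subtype

/-- The composite connecting map `q^j_i : V j → V i` for `i ≤ j`. -/
def qIter (K : Type) [Field K] (V : ℕ → Type) [∀ i, AddCommGroup (V i)]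
    [∀ i, Module K (V i)] (q : ∀ i, V (i + 1) →ₗ[K] V i) (i : ℕ) :
    ∀ j, i ≤ j → (V j →ₗ[K] V i)
  | 0, h => by
    have hi : i = 0 := Nat.le_zero.mp h
    subst hi; exact LinearMap.id
  | j + 1, h =>
    if heq : i = j + 1 then by subst heq; exact LinearMap.id
    else (qIter K V q i j (by omega)).comp (q j)

section aux
variable {K : Type} [Field K] {V : ℕ → Type} [∀ i, AddCommGroup (V i)]
    [∀ i, Module K (V i)] (q : ∀ i, V (i + 1) →ₗ[K] V i)

lemma qIter_self (i : ℕ) (h : i ≤ i) : qIter K V q i i h = LinearMap.id := by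
  cases i with
  | zero => simp [qIter]
  | succ k => simp [qIter]

lemma qIter_succ (i j : ℕ) (h : i ≤ j) (h' : i ≤ j + 1) (x : V (j + 1)) :
    qIter K V q i (j + 1) h' x = qIter K V q i j h (q j x) := by
  have : i ≠ j + 1 := by omega
  simp [qIter, this]

lemma qIter_step (i : ℕ) : ∀ j (h : i + 1 ≤ j) (h' : i ≤ j) (x : V j),
    q i (qIter K V q (i + 1) j h x) = qIter K V q i j h' x := by
  intro j
  induction j with
  | zero => omega
  | succ j ih =>
    intro h h' x
    by_cases hij : i = j
    · subst hij
      rw [qIter_self, qIter_succ q i i le_rfl h', qIter_self]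
      rfl
    · rw [qIter_succ q (i+1) j (by omega) h, qIter_succ q i j (by omega) h',
        ih (by omega) (by omega)]

lemma invLim_qIter (v : ↥(invLim K V q)) (i : ℕ) : ∀ j (h : i ≤ j),
    qIter K V q i j h (v.1 j) = v.1 i := by
  intro j
  induction j with
  | zero =>
    intro h
    have : i = 0 := by omega
    subst this; rw [qIter_self]; rfl
  | succ j ih =>
    intro h
    by_cases hij : i = j + 1
    · subst hij; rw [qIter_self]; rfl
    · rw [qIter_succ q i j (by omega) h, v.2 j, ih (by omega)]

lemma qIter_cont [TopologicalSpace K] [∀ i, TopologicalSpace (V i)]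
    (hq : ∀ i, Continuous (q i)) (i : ℕ) : ∀ j (h : i ≤ j),
    Continuous (qIter K V q i j h) := by
  intro j
  induction j with
  | zero =>
    intro h
    have : i = 0 := by omega
    subst this; rw [qIter_self]; exact continuous_id
  | succ j ih =>
    intro h
    by_cases hij : i = j + 1
    · subst hij; rw [qIter_self]; exact continuous_id
    · have hj : i ≤ j := by omega
      have : (⇑(qIter K V q i (j+1) h)) = fun x => qIter K V q i j hj (q j x) :=
        funext fun x => qIter_succ q i j hj h x
      rw [this]
      exact (ih hj).comp (hq j)

section prod
variable (K : Type) [Field K] [TopologicalSpace K]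
variable (V : ℕ → ℕ → Type) [∀ n i, AddCommGroup (V n i)] [∀ n i, Module K (V n i)]
  [∀ n i, TopologicalSpace (V n i)]
variable (Q : ∀ n i, V n (i + 1) →ₗ[K] V n i)

/-- The diagonal inverse system: stage `i` is the product of the `i`-th stages of
the first `i+1` systems. -/
abbrev Wst (i : ℕ) : Type := ∀ n : Fin (i + 1), V n i

/-- Connecting maps of the diagonal system. -/
def rMap (i : ℕ) : Wst V (i + 1) →ₗ[K] Wst V i :=
  LinearMap.pi fun n : Fin (i + 1) => (Q n i).comp (LinearMap.proj n.castSucc)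

lemma rMap_apply (i : ℕ) (w : Wst V (i + 1)) (n : Fin (i + 1)) :
    rMap K V Q i w n = Q n i (w n.castSucc) := rfl

lemma rMap_cont (hQ : ∀ n i, Continuous (Q n i)) (i : ℕ) : Continuous (rMap K V Q i) :=
  continuous_pi fun n => (hQ n i).comp (continuous_apply _)

/-- Forward map. -/
def toDiag (v : ∀ n, ↥(invLim K (V n) (Q n))) : ↥(invLim K (Wst V) (rMap K V Q)) :=
  ⟨fun i n => (v n).1 i, by
    intro i
    funext n
    rw [rMap_apply]
    exact (v n).2 i⟩

/-- Backward map. -/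
def ofDiag (w : ↥(invLim K (Wst V) (rMap K V Q))) (n : ℕ) : ↥(invLim K (V n) (Q n)) :=
  ⟨fun i => if h : n ≤ i then w.1 i ⟨n, by omega⟩
    else qIter K (V n) (Q n) i n (by omega) (w.1 n ⟨n, by omega⟩), by
    intro i
    dsimp only
    by_cases h : n ≤ i
    · rw [dif_pos h, dif_pos (by omega : n ≤ i + 1)]
      have := congrFun (w.2 i) ⟨n, by omega⟩
      rw [rMap_apply] at this
      exact this
    · rw [dif_neg h]
      by_cases h2 : n ≤ i + 1
      · have hn : n = i + 1 := by omega
        subst hn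
        rw [dif_pos h2, qIter_succ (Q (i+1)) i i le_rfl (by omega), qIter_self]
        rfl
      · rw [dif_neg h2, qIter_step]⟩

lemma toDiag_ofDiag (w : ↥(invLim K (Wst V) (rMap K V Q))) :
    toDiag K V Q (ofDiag K V Q w) = w := by
  apply Subtype.ext
  funext i n
  show (ofDiag K V Q w n).1 i = w.1 i n
  have h : (n : ℕ) ≤ i := by omega
  simp only [ofDiag, dif_pos h]

lemma ofDiag_toDiag (v : ∀ n, ↥(invLim K (V n) (Q n))) :
    ofDiag K V Q (toDiag K V Q v) = v := by
  funext n
  apply Subtype.ext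
  funext i
  simp only [ofDiag]
  by_cases h : n ≤ i
  · rw [dif_pos h]; rfl
  · rw [dif_neg h]
    exact invLim_qIter (Q n) (v n) i n (by omega)

/-- The product of the inverse limits is topologically isomorphic to the limit of
the diagonal system. -/
def diagEquiv (hQ : ∀ n i, Continuous (Q n i)) :
    (∀ n, ↥(invLim K (V n) (Q n))) ≃L[K] ↥(invLim K (Wst V) (rMap K V Q)) where
  toFun := toDiag K V Q
  invFun := ofDiag K V Q
  left_inv := ofDiag_toDiag K V Q
  right_inv := toDiag_ofDiag K V Q
  map_add' := fun v v' => by apply Subtype.ext; funext i n; rfl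
  map_smul' := fun c v => by apply Subtype.ext; funext i n; rfl
  continuous_toFun := by
    apply Continuous.subtype_mk
    exact continuous_pi fun i => continuous_pi fun n =>
      ((continuous_apply (i : ℕ)).comp continuous_subtype_val).comp (continuous_apply _)
  continuous_invFun := by
    apply continuous_pi
    intro n
    apply Continuous.subtype_mk
    apply continuous_pi
    intro i
    by_cases h : n ≤ i
    · simp only [ofDiag, dif_pos h]
      exact (continuous_apply _).comp ((continuous_apply i).comp continuous_subtype_val)
    · simp only [ofDiag, dif_neg h]
      exact (qIter_cont (Q n) (hQ n) i n (by omega)).comp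
        ((continuous_apply _).comp ((continuous_apply n).comp continuous_subtype_val))

end prod

section congr
variable (K : Type) [Field K] [TopologicalSpace K]
variable (A B : ℕ → Type) [∀ i, AddCommGroup (A i)] [∀ i, Module K (A i)]
  [∀ i, TopologicalSpace (A i)] [∀ i, AddCommGroup (B i)] [∀ i, Module K (B i)]
  [∀ i, TopologicalSpace (B i)]
variable (qa : ∀ i, A (i + 1) →ₗ[K] A i) (qb : ∀ i, B (i + 1) →ₗ[K] B i)
  (e : ∀ i, A i ≃ₗ[K] B i)

/-- Transport an inverse limit along stagewise topological linear isomorphisms. -/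
def invLimCongr (he : ∀ i, Continuous (e i)) (he' : ∀ i, Continuous (e i).symm)
    (hcomm : ∀ i x, e i (qa i x) = qb i (e (i + 1) x)) :
    ↥(invLim K A qa) ≃L[K] ↥(invLim K B qb) :=
  { toLinearEquiv :=
    { toFun := fun v => ⟨fun i => e i (v.1 i), by
        intro i
        rw [← hcomm i, v.2 i]⟩
      invFun := fun w => ⟨fun i => (e i).symm (w.1 i), by
        intro i
        apply (e i).injective
        rw [hcomm i, (e (i + 1)).apply_symm_apply, w.2 i, (e i).apply_symm_apply]⟩
      left_inv := fun v => by apply Subtype.ext; funext i; exact (e i).symm_apply_apply _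
      right_inv := fun w => by apply Subtype.ext; funext i; exact (e i).apply_symm_apply _
      map_add' := fun v v' => by apply Subtype.ext; funext i; exact (e i).map_add _ _
      map_smul' := fun c v => by apply Subtype.ext; funext i; exact (e i).map_smul _ _ }
    continuous_toFun := by
      apply Continuous.subtype_mk
      exact continuous_pi fun i =>
        (he i).comp ((continuous_apply i).comp continuous_subtype_val)
    continuous_invFun := by
      apply Continuous.subtype_mk
      exact continuous_pi fun i =>
        (he' i).comp ((continuous_apply i).comp continuous_subtype_val) }
end congr

end aux

/-- A countable product of pro-finite-dimensional `K`-vector spaces,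
with the product topology, is again a pro-finite-dimensional `K`-vector space:
it is topologically `K`-linearly isomorphic to an inverse limit of an inverse
sequence of finite-dimensional `K`-vector spaces. -/
theorem stmt9 (K : Type) [Field K] [TopologicalSpace K] [IsTopologicalDivisionRing K]
    [T2Space K]
    (d : ℕ → ℕ → ℕ)
    (q : ∀ n i, (Fin (d n (i + 1)) → K) →ₗ[K] (Fin (d n i) → K))
    (hq : ∀ n i, Continuous (q n i)) :
    ∃ m : ℕ → ℕ, ∃ r : ∀ i, (Fin (m (i + 1)) → K) →ₗ[K] (Fin (m i) → K),
      (∀ i, Continuous (r i)) ∧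
      Nonempty ((∀ n, ↥(invLim K (fun i => Fin (d n i) → K) (q n))) ≃L[K]
        ↥(invLim K (fun i => Fin (m i) → K) r)) := by
  set V : ℕ → ℕ → Type := fun n i => Fin (d n i) → K with hV
  set m : ℕ → ℕ := fun i => ∑ n : Fin (i + 1), d n i with hm
  have hcard : ∀ i, Fintype.card (Σ n : Fin (i + 1), Fin (d n i)) = m i := by
    intro i; simp [hm]
  let σ : ∀ i, (Σ n : Fin (i + 1), Fin (d n i)) ≃ Fin (m i) :=
    fun i => Fintype.equivFinOfCardEq (hcard i)
  -- the packing equivalence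
  let pack : ∀ i, (Wst V i) ≃ₗ[K] (Fin (m i) → K) := fun i =>
    { toFun := fun w j => w ((σ i).symm j).1 ((σ i).symm j).2
      invFun := fun f n k => f (σ i ⟨n, k⟩)
      left_inv := fun w => by
        funext n k
        show w ((σ i).symm ((σ i) ⟨n, k⟩)).1 ((σ i).symm ((σ i) ⟨n, k⟩)).2 = w n k
        rw [Equiv.symm_apply_apply]
      right_inv := fun f => by
        funext j
        show f ((σ i) ⟨((σ i).symm j).1, ((σ i).symm j).2⟩) = f j
        rw [Sigma.eta, Equiv.apply_symm_apply]
      map_add' := fun w w' => rfl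
      map_smul' := fun c w => rfl }
  have hpack : ∀ i, Continuous (pack i) := by
    intro i
    show Continuous fun (w : Wst V i) (j : Fin (m i)) => w ((σ i).symm j).1 ((σ i).symm j).2
    exact continuous_pi fun j => (continuous_apply _).comp (continuous_apply _)
  have hpack' : ∀ i, Continuous (pack i).symm := by
    intro i
    show Continuous fun (f : Fin (m i) → K) n k => f ((σ i) ⟨n, k⟩)
    exact continuous_pi fun n => continuous_pi fun k => continuous_apply _
  let r : ∀ i, (Fin (m (i + 1)) → K) →ₗ[K] (Fin (m i) → K) := fun i =>
    (pack i).toLinearMap ∘ₗ (rMap K V q i) ∘ₗ ((pack (i + 1)).symm.toLinearMap)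
  have hr : ∀ i, Continuous (r i) := fun i =>
    (hpack i).comp ((rMap_cont K V q hq i).comp (hpack' (i + 1)))
  refine ⟨m, r, hr, ⟨?_⟩⟩
  refine (diagEquiv K V q hq).trans
    (invLimCongr K (Wst V) (fun i => Fin (m i) → K) (rMap K V q) r pack hpack hpack' ?_)
  intro i x
  show pack i (rMap K V q i x) = pack i (rMap K V q i ((pack (i+1)).symm ((pack (i+1)) x)))
  rw [LinearEquiv.symm_apply_apply]
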